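/- Let (q_n)_{n≥1} be an enumeration of ℚ ∩ [0,1]. For each n define f_n : [0,1] → [−1,1] by f_n(x) = sin(1/(x − q_n)) for x ≠ q_n and f_n(q_n) = 0, and let f(x) = Σ_{n=1}^∞ 2^{−n} f_n(x). Then the graph E = {(x, f(x)) : x ∈ [0,1]} is a connected subset of [0,1] × [−1,1]. -/

import Mathlib

open Set Filter Topology

noncomputable def gterm (q : ℕ → ℝ) (n : ℕ) (x : ℝ) : ℝ :=
  (1 / 2 : ℝ) ^ (n + 1) * (if x = q n then 0 else Real.sin (1 / (x - q n)))

lemma gterm_bound (q : ℕ → ℝ) (n : ℕ) (x : ℝ) : |gterm q n x| ≤ (1 / 2 : ℝ) ^ (n + 1) := by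
  rw [gterm, abs_mul, abs_pow]
  have h1 : |(1/2 : ℝ)| = 1/2 := by norm_num
  rw [h1]
  have h2 : |if x = q n then (0:ℝ) else Real.sin (1 / (x - q n))| ≤ 1 := by
    split_ifs with h
    · simp
    · exact Real.abs_sin_le_one _
  nlinarith [pow_pos (by norm_num : (0:ℝ) < 1/2) (n+1), pow_nonneg (by norm_num : (0:ℝ) ≤ 1/2) (n+1)]

lemma summable_c : Summable (fun n : ℕ => ((1:ℝ) / 2) ^ (n + 1)) := by
  have := (summable_geometric_of_lt_one (by norm_num) (by norm_num : (1:ℝ)/2 < 1)).mul_left (1/2)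
  simpa [pow_succ, mul_comm] using this

lemma tsum_c : ∑' n : ℕ, ((1:ℝ) / 2) ^ (n + 1) = 1 := by
  have h : ∀ n : ℕ, ((1:ℝ)/2) ^ (n+1) = 1 / 2 / 2 ^ n := by
    intro n; rw [pow_succ, one_div_pow]; ring
  rw [tsum_congr h]
  exact tsum_geometric_two' 1

lemma gterm_summable (q : ℕ → ℝ) (x : ℝ) : Summable (fun n => gterm q n x) :=
  Summable.of_norm_bounded summable_c (fun n => by simpa [Real.norm_eq_abs] using gterm_bound q n x)

lemma abs_tsum_gterm_le (q : ℕ → ℝ) (x : ℝ) : |∑' n, gterm q n x| ≤ 1 := by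
  have h := tsum_of_norm_bounded (f := fun n => gterm q n x)
    ((Summable.hasSum_iff summable_c).mpr tsum_c)
    (fun n => by rw [Real.norm_eq_abs]; exact gterm_bound q n x)
  rwa [Real.norm_eq_abs] at h

lemma contAt_tsum {F : ℕ → ℝ → ℝ} {u : ℕ → ℝ} (hu : Summable u)
    (hb : ∀ n x, |F n x| ≤ u n) {x : ℝ} (hc : ∀ n, ContinuousAt (F n) x) :
    ContinuousAt (fun y => ∑' n, F n y) x := by
  have tu : TendstoUniformly (fun (t : Finset ℕ) y => ∑ n ∈ t, F n y)
      (fun y => ∑' n, F n y) atTop :=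
    tendstoUniformly_tsum hu (by simpa [Real.norm_eq_abs] using hb)
  apply continuousAt_of_locally_uniform_approx_of_continuousAt
  intro v hv
  obtain ⟨t, ht⟩ := (tu v hv).exists
  exact ⟨Set.univ, univ_mem, fun y => ∑ n ∈ t, F n y,
    tendsto_finset_sum _ fun n _ => hc n, fun y _ => ht y⟩

lemma gterm_contAt (q : ℕ → ℝ) (n : ℕ) {t : ℝ} (h : t ≠ q n) :
    ContinuousAt (gterm q n) t := by
  have hne : ∀ᶠ x in 𝓝 t, x ≠ q n := eventually_ne_nhds h
  have hcong : (fun x => (1 / 2 : ℝ) ^ (n + 1) * Real.sin (1 / (x - q n))) =ᶠ[𝓝 t] gterm q n := by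
    filter_upwards [hne] with x hx
    simp [gterm, hx]
  apply ContinuousAt.congr _ hcong
  apply ContinuousAt.mul continuousAt_const
  apply Real.continuous_sin.continuousAt.comp
  exact ContinuousAt.div continuousAt_const (continuousAt_id.sub continuousAt_const)
    (sub_ne_zero.mpr h)

lemma f_contAt (q : ℕ → ℝ) {t : ℝ} (h : t ∉ Set.range q) :
    ContinuousAt (fun x => ∑' n, gterm q n x) t :=
  contAt_tsum summable_c (gterm_bound q) fun n =>
    gterm_contAt q n (fun he => h ⟨n, he.symm⟩)

lemma g_contAt (q : ℕ → ℝ) (hq_inj : Function.Injective q) (m : ℕ) :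
    ContinuousAt (fun x => ∑' n, (if n = m then 0 else gterm q n x)) (q m) := by
  apply contAt_tsum summable_c
  · intro n x
    split_ifs with h
    · simp only [abs_zero]; positivity
    · exact gterm_bound q n x
  · intro n
    by_cases h : n = m
    · simp only [if_pos h]; exact continuousAt_const
    · simp only [if_neg h]
      exact gterm_contAt q n (fun he => h (hq_inj he.symm))

lemma f_split (q : ℕ → ℝ) (m : ℕ) (x : ℝ) :
    ∑' n, gterm q n x = gterm q m x + ∑' n, (if n = m then 0 else gterm q n x) :=
  Summable.tsum_eq_add_tsum_ite (gterm_summable q x) m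

lemma fval_at (q : ℕ → ℝ) (m : ℕ) :
    ∑' n, gterm q n (q m) = ∑' n, (if n = m then 0 else gterm q n (q m)) := by
  rw [f_split q m (q m)]
  simp [gterm]

lemma oscR (q : ℕ → ℝ) (hq_inj : Function.Injective q) (m : ℕ) {δ : ℝ} (hδ : 0 < δ) :
    ∃ x : ℝ, q m < x ∧ x - q m < δ ∧
      |(∑' n, gterm q n x) - (∑' n, gterm q n (q m))| < δ := by
  have hπ := Real.pi_pos
  have hg := g_contAt q hq_inj m
  rw [Metric.continuousAt_iff] at hg
  obtain ⟨δ₁, hδ₁, hg⟩ := hg δ hδ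
  set m' := min δ δ₁ with hm'def
  have hm' : 0 < m' := lt_min hδ hδ₁
  obtain ⟨k, hk⟩ := exists_nat_gt (1 / (m' * Real.pi))
  set r := 1 / (((k : ℝ) + 1) * Real.pi) with hrdef
  have hkpos : (0:ℝ) < ((k : ℝ) + 1) * Real.pi := by positivity
  have hr : 0 < r := by positivity
  have h1 : 1 / m' < ((k : ℝ) + 1) * Real.pi := by
    have h2 : 1 / (m' * Real.pi) * Real.pi = 1 / m' := by
      field_simp
    nlinarith [hk, (Nat.cast_nonneg k : (0:ℝ) ≤ k)]
  have hrm : r < m' := by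
    rw [hrdef]
    rw [div_lt_iff₀ hkpos]
    rw [div_lt_iff₀ hm'] at h1
    linarith [mul_comm m' (((k : ℝ) + 1) * Real.pi) ▸ h1]
  refine ⟨q m + r, by linarith, by simpa using lt_of_lt_of_le hrm (min_le_left _ _), ?_⟩
  have hx_ne : q m + r ≠ q m := by intro h; nlinarith [hr]
  have hsin : Real.sin (1 / (q m + r - q m)) = 0 := by
    have : q m + r - q m = r := by ring
    rw [this, hrdef, one_div_one_div]
    have : ((k : ℝ) + 1) * Real.pi = ((k + 1 : ℕ) : ℝ) * Real.pi := by push_cast; ring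
    rw [this, Real.sin_nat_mul_pi]
  have hgm : gterm q m (q m + r) = 0 := by
    rw [gterm, if_neg hx_ne, hsin, mul_zero]
  rw [f_split q m (q m + r), hgm, zero_add, fval_at q m]
  have := hg (show dist (q m + r) (q m) < δ₁ by
    rw [Real.dist_eq]
    have : q m + r - q m = r := by ring
    rw [this, abs_of_pos hr]
    exact lt_of_lt_of_le hrm (min_le_right _ _))
  rwa [Real.dist_eq] at this

lemma oscL (q : ℕ → ℝ) (hq_inj : Function.Injective q) (m : ℕ) {δ : ℝ} (hδ : 0 < δ) :
    ∃ x : ℝ, x < q m ∧ q m - x < δ ∧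
      |(∑' n, gterm q n x) - (∑' n, gterm q n (q m))| < δ := by
  have hπ := Real.pi_pos
  have hg := g_contAt q hq_inj m
  rw [Metric.continuousAt_iff] at hg
  obtain ⟨δ₁, hδ₁, hg⟩ := hg δ hδ
  set m' := min δ δ₁ with hm'def
  have hm' : 0 < m' := lt_min hδ hδ₁
  obtain ⟨k, hk⟩ := exists_nat_gt (1 / (m' * Real.pi))
  set r := 1 / (((k : ℝ) + 1) * Real.pi) with hrdef
  have hkpos : (0:ℝ) < ((k : ℝ) + 1) * Real.pi := by positivity
  have hr : 0 < r := by positivity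
  have h1 : 1 / m' < ((k : ℝ) + 1) * Real.pi := by
    have h2 : 1 / (m' * Real.pi) * Real.pi = 1 / m' := by
      field_simp
    nlinarith [hk, (Nat.cast_nonneg k : (0:ℝ) ≤ k)]
  have hrm : r < m' := by
    rw [hrdef]
    rw [div_lt_iff₀ hkpos]
    rw [div_lt_iff₀ hm'] at h1
    linarith [mul_comm m' (((k : ℝ) + 1) * Real.pi) ▸ h1]
  refine ⟨q m - r, by linarith, by simpa using lt_of_lt_of_le hrm (min_le_left _ _), ?_⟩
  have hx_ne : q m - r ≠ q m := by intro h; nlinarith [hr]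
  have hsin : Real.sin (1 / (q m - r - q m)) = 0 := by
    have h3 : q m - r - q m = -r := by ring
    rw [h3, one_div_neg_eq_neg_one_div, hrdef, one_div_one_div, Real.sin_neg]
    have : ((k : ℝ) + 1) * Real.pi = ((k + 1 : ℕ) : ℝ) * Real.pi := by push_cast; ring
    rw [this, Real.sin_nat_mul_pi, neg_zero]
  have hgm : gterm q m (q m - r) = 0 := by
    rw [gterm, if_neg hx_ne, hsin, mul_zero]
  rw [f_split q m (q m - r), hgm, zero_add, fval_at q m]
  have := hg (show dist (q m - r) (q m) < δ₁ by
    rw [Real.dist_eq]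
    have h4 : q m - r - q m = -r := by ring
    rw [h4, abs_neg, abs_of_pos hr]
    exact lt_of_lt_of_le hrm (min_le_right _ _))
  rwa [Real.dist_eq] at this

lemma absorb {A B S : Set ℝ} (hS : IsPreconnected S)
    (hcov : ∀ x ∈ S, x ∈ A ∨ x ∈ B)
    {t η : ℝ}
    (hiso : ∀ y, y ∈ Set.Icc (0:ℝ) 1 → y ∈ closure A → y ∈ closure B → |y - t| < η → y = t)
    (hSI : S ⊆ Set.Icc (0:ℝ) 1)
    (hst : ∀ y ∈ S, y ≠ t ∧ |y - t| < η)
    {b : ℝ} (hbS : b ∈ S) (hbB : b ∈ B) :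
    S ⊆ B := by
  by_contra hnot
  obtain ⟨a, haS, haB⟩ := not_subset.mp hnot
  have haA : a ∈ A := (hcov a haS).resolve_right haB
  have hsub : S ⊆ closure A ∪ closure B := fun x hx =>
    (hcov x hx).imp (fun h => subset_closure h) (fun h => subset_closure h)
  obtain ⟨y, hyS, hyA, hyB⟩ := isPreconnected_closed_iff.mp hS (closure A) (closure B)
    isClosed_closure isClosed_closure hsub ⟨a, haS, subset_closure haA⟩
    ⟨b, hbS, subset_closure hbB⟩
  exact (hst y hyS).1 (hiso y (hSI hyS) hyA hyB (hst y hyS).2)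

lemma case2R (q : ℕ → ℝ) (hq_inj : Function.Injective q) (f : ℝ → ℝ)
    (hf : ∀ x, f x = ∑' n, gterm q n x) (m : ℕ) {W : Set (ℝ × ℝ)} (hW : IsOpen W)
    (htW : (q m, f (q m)) ∈ W) {C : Set ℝ} {b : ℝ} (hb : q m < b)
    (hC : Set.Ioc (q m) b ⊆ C) : ∃ x ∈ C, (x, f x) ∈ W := by
  obtain ⟨ε, hε, hball⟩ := Metric.isOpen_iff.mp hW _ htW
  have hδ : 0 < min (b - q m) ε := lt_min (by linarith) hε
  obtain ⟨x, hx1, hx2, hx3⟩ := oscR q hq_inj m hδ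
  have hxb : x ≤ b := by
    have := min_le_left (b - q m) ε
    linarith
  refine ⟨x, hC ⟨hx1, hxb⟩, hball ?_⟩
  rw [Metric.mem_ball, Prod.dist_eq]
  have hεle := min_le_right (b - q m) ε
  apply max_lt
  · rw [Real.dist_eq, abs_of_pos (by linarith : (0:ℝ) < x - q m)]
    linarith
  · rw [Real.dist_eq, hf x, hf (q m)]
    calc |(∑' n, gterm q n x) - ∑' n, gterm q n (q m)| < min (b - q m) ε := hx3
    _ ≤ ε := hεle

lemma case2L (q : ℕ → ℝ) (hq_inj : Function.Injective q) (f : ℝ → ℝ)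
    (hf : ∀ x, f x = ∑' n, gterm q n x) (m : ℕ) {W : Set (ℝ × ℝ)} (hW : IsOpen W)
    (htW : (q m, f (q m)) ∈ W) {C : Set ℝ} {b : ℝ} (hb : b < q m)
    (hC : Set.Ico b (q m) ⊆ C) : ∃ x ∈ C, (x, f x) ∈ W := by
  obtain ⟨ε, hε, hball⟩ := Metric.isOpen_iff.mp hW _ htW
  have hδ : 0 < min (q m - b) ε := lt_min (by linarith) hε
  obtain ⟨x, hx1, hx2, hx3⟩ := oscL q hq_inj m hδ
  have hxb : b ≤ x := by
    have := min_le_left (q m - b) ε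
    linarith
  refine ⟨x, hC ⟨hxb, hx1⟩, hball ?_⟩
  rw [Metric.mem_ball, Prod.dist_eq]
  have hεle := min_le_right (q m - b) ε
  apply max_lt
  · rw [Real.dist_eq, abs_of_neg (by linarith : x - q m < 0)]
    linarith
  · rw [Real.dist_eq, hf x, hf (q m)]
    calc |(∑' n, gterm q n x) - ∑' n, gterm q n (q m)| < min (q m - b) ε := hx3
    _ ≤ ε := hεle

lemma not_countable_cantor : ¬ Countable (ℕ → Bool) := by
  intro h
  have h1 : Cardinal.mk (ℕ → Bool) ≤ Cardinal.aleph0 := Cardinal.mk_le_aleph0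
  have h2 : Cardinal.mk (ℕ → Bool) = 2 ^ Cardinal.aleph0 := by
    rw [Cardinal.mk_arrow]; simp
  rw [h2] at h1
  exact absurd h1 (not_le.mpr (Cardinal.cantor _))

lemma exists_isolated {F : Set ℝ} (hF : IsClosed F) (hc : F.Countable) (hne : F.Nonempty) :
    ∃ t ∈ F, ∃ η > (0:ℝ), ∀ y ∈ F, |y - t| < η → y = t := by
  by_contra h
  push_neg at h
  have hperf : Perfect F := by
    constructor
    · exact hF
    · intro x hx
      rw [accPt_iff_nhds]
      intro U hU
      obtain ⟨η, hη, hball⟩ := Metric.nhds_basis_ball.mem_iff.mp hU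
      obtain ⟨y, hyF, hyd, hyx⟩ := h x hx η hη
      exact ⟨y, ⟨hball (by simpa [Real.dist_eq] using hyd), hyF⟩, hyx⟩
  obtain ⟨g, hgr, -, hginj⟩ := hperf.exists_nat_bool_injection hne
  have hcr : (Set.range g).Countable := hc.mono hgr
  have : Countable (ℕ → Bool) := by
    have := hcr.to_subtype
    exact (Equiv.ofInjective g hginj).countable_iff.mpr inferInstance
  exact not_countable_cantor this

theorem graph_of_sum_of_sin_connected
    (q : ℕ → ℝ) (hq_inj : Function.Injective q)
    (hq_range : Set.range q = {x : ℝ | x ∈ Set.Icc (0 : ℝ) 1 ∧ ∃ p : ℚ, (p : ℝ) = x})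
    (f : ℝ → ℝ)
    (hf : ∀ x : ℝ, f x =
      ∑' n : ℕ, (1 / 2 : ℝ) ^ (n + 1) * (if x = q n then 0 else Real.sin (1 / (x - q n)))) :
    {p : ℝ × ℝ | p.1 ∈ Set.Icc (0 : ℝ) 1 ∧ p.2 = f p.1} ⊆
      Set.Icc (0 : ℝ) 1 ×ˢ Set.Icc (-1 : ℝ) 1 ∧
    IsConnected {p : ℝ × ℝ | p.1 ∈ Set.Icc (0 : ℝ) 1 ∧ p.2 = f p.1} := by
  have hf' : ∀ x, f x = ∑' n, gterm q n x := hf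
  constructor
  · rintro ⟨x, y⟩ ⟨hx, hy⟩
    simp only [Set.mem_setOf_eq] at hx hy
    refine ⟨hx, ?_⟩
    simp only [Set.mem_Icc]
    rw [hy, hf' x]
    constructor
    · linarith [abs_le.mp (abs_tsum_gterm_le q x) |>.1]
    · linarith [abs_le.mp (abs_tsum_gterm_le q x) |>.2]
  constructor
  · exact ⟨(0, f 0), by simp⟩
  intro U V hU hV hUV hSU hSV
  obtain ⟨pu, hpuS, hpuU⟩ := hSU
  obtain ⟨pv, hpvS, hpvV⟩ := hSV
  set A := {x : ℝ | x ∈ Set.Icc (0:ℝ) 1 ∧ (x, f x) ∈ U} with hAdef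
  set B := {x : ℝ | x ∈ Set.Icc (0:ℝ) 1 ∧ (x, f x) ∉ U} with hBdef
  have hcov : ∀ x ∈ Set.Icc (0:ℝ) 1, x ∈ A ∨ x ∈ B := fun x hx => by
    by_cases h : (x, f x) ∈ U
    · exact Or.inl ⟨hx, h⟩
    · exact Or.inr ⟨hx, h⟩
  have hdisj : ∀ x, x ∈ A → x ∈ B → False := fun x ha hb => hb.2 ha.2
  have hgr : ∀ x ∈ Set.Icc (0:ℝ) 1, ((x : ℝ), f x) ∈ U ∪ V := fun x hx => hUV ⟨hx, rfl⟩
  have hBV : ∀ x, x ∈ B → (x, f x) ∈ V := fun x hx => (hgr x hx.1).resolve_left hx.2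
  have hgoal : ∀ x : ℝ, x ∈ Set.Icc (0:ℝ) 1 → (x, f x) ∈ U → (x, f x) ∈ V →
      ({p : ℝ × ℝ | p.1 ∈ Set.Icc (0 : ℝ) 1 ∧ p.2 = f p.1} ∩ (U ∩ V)).Nonempty :=
    fun x hx h1 h2 => ⟨(x, f x), ⟨hx, rfl⟩, h1, h2⟩
  by_cases hBne : B.Nonempty
  · obtain ⟨b0, hb0⟩ := hBne
    have hAne : A.Nonempty := by
      refine ⟨pu.1, hpuS.1, ?_⟩
      have h : pu = (pu.1, f pu.1) := Prod.ext rfl hpuS.2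
      rwa [← h]
    obtain ⟨a0, ha0⟩ := hAne
    have hsubcl : Set.Icc (0:ℝ) 1 ⊆ closure A ∪ closure B := fun x hx =>
      (hcov x hx).imp (fun h => subset_closure h) (fun h => subset_closure h)
    obtain ⟨t, htI, htclA, htclB⟩ := isPreconnected_closed_iff.mp isPreconnected_Icc
      (closure A) (closure B) isClosed_closure isClosed_closure hsubcl
      ⟨a0, ha0.1, subset_closure ha0⟩ ⟨b0, hb0.1, subset_closure hb0⟩
    set F := Set.Icc (0:ℝ) 1 ∩ (closure A ∩ closure B) with hFdef
    have hFne : F.Nonempty := ⟨t, htI, htclA, htclB⟩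
    have hFclosed : IsClosed F := isClosed_Icc.inter (isClosed_closure.inter isClosed_closure)
    by_cases hq1 : ∀ y ∈ F, y ∈ Set.range q
    · -- F is countable: isolated point argument
      have hFc : F.Countable := Set.Countable.mono (fun y hy => hq1 y hy) (Set.countable_range q)
      obtain ⟨s, hsF, η, hη, hiso⟩ := exists_isolated hFclosed hFc hFne
      obtain ⟨m, hm⟩ := hq1 s hsF
      subst hm
      have hiso' : ∀ y, y ∈ Set.Icc (0:ℝ) 1 → y ∈ closure A → y ∈ closure B →
          |y - q m| < η → y = q m :=
        fun y h1 h2 h3 h4 => hiso y ⟨h1, h2, h3⟩ h4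
      rcases hcov (q m) hsF.1 with hsA | hsB
      · -- q m ∈ A : the interval on the B side leads to a contradiction
        have hsnB : q m ∉ B := fun h => hdisj (q m) hsA h
        obtain ⟨b, hbB, hbd⟩ := Metric.mem_closure_iff.mp hsF.2.2 η hη
        have hbne : b ≠ q m := fun h => hsnB (h ▸ hbB)
        rcases hbne.lt_or_gt with hlt | hgt
        · have hbd' : q m - b < η := by
            rw [Real.dist_eq, abs_of_pos (by linarith)] at hbd
            linarith
          have hsub : Set.Ico b (q m) ⊆ B := absorb isPreconnected_Ico
            (fun x hx => hcov x ⟨le_trans hbB.1.1 hx.1, le_trans (le_of_lt hx.2) hsF.1.2⟩)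
            hiso'
            (fun x hx => ⟨le_trans hbB.1.1 hx.1, le_trans (le_of_lt hx.2) hsF.1.2⟩)
            (fun y hy => ⟨ne_of_lt hy.2, by
              rw [abs_of_neg (by linarith [hy.2] : y - q m < 0)]
              linarith [hy.1]⟩)
            ⟨le_refl b, hlt⟩ hbB
          obtain ⟨x, hxB, hxU⟩ := case2L q hq_inj f hf' m hU hsA.2 hlt hsub
          exact absurd hxU hxB.2
        · have hbd' : b - q m < η := by
            rw [Real.dist_eq, abs_of_neg (by linarith)] at hbd
            linarith
          have hsub : Set.Ioc (q m) b ⊆ B := absorb isPreconnected_Ioc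
            (fun x hx => hcov x ⟨le_trans hsF.1.1 (le_of_lt hx.1), le_trans hx.2 hbB.1.2⟩)
            hiso'
            (fun x hx => ⟨le_trans hsF.1.1 (le_of_lt hx.1), le_trans hx.2 hbB.1.2⟩)
            (fun y hy => ⟨ne_of_gt hy.1, by
              rw [abs_of_pos (by linarith [hy.1] : (0:ℝ) < y - q m)]
              linarith [hy.2]⟩)
            ⟨hgt, le_refl b⟩ hbB
          obtain ⟨x, hxB, hxU⟩ := case2R q hq_inj f hf' m hU hsA.2 hgt hsub
          exact absurd hxU hxB.2
      · -- q m ∈ B : the interval on the A side gives a point of U ∩ V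
        have hsV : (q m, f (q m)) ∈ V := hBV (q m) hsB
        have hsnA : q m ∉ A := fun h => hdisj (q m) h hsB
        obtain ⟨a, haA, had⟩ := Metric.mem_closure_iff.mp hsF.2.1 η hη
        have hane : a ≠ q m := fun h => hsnA (h ▸ haA)
        rcases hane.lt_or_gt with hlt | hgt
        · have had' : q m - a < η := by
            rw [Real.dist_eq, abs_of_pos (by linarith)] at had
            linarith
          have hsub : Set.Ico a (q m) ⊆ A := absorb (A := B) (B := A) isPreconnected_Ico
            (fun x hx => (hcov x ⟨le_trans haA.1.1 hx.1, le_trans (le_of_lt hx.2) hsF.1.2⟩).symm)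
            (fun y h1 h2 h3 h4 => hiso' y h1 h3 h2 h4)
            (fun x hx => ⟨le_trans haA.1.1 hx.1, le_trans (le_of_lt hx.2) hsF.1.2⟩)
            (fun y hy => ⟨ne_of_lt hy.2, by
              rw [abs_of_neg (by linarith [hy.2] : y - q m < 0)]
              linarith [hy.1]⟩)
            ⟨le_refl a, hlt⟩ haA
          obtain ⟨x, hxA, hxV⟩ := case2L q hq_inj f hf' m hV hsV hlt hsub
          exact hgoal x hxA.1 hxA.2 hxV
        · have had' : a - q m < η := by
            rw [Real.dist_eq, abs_of_neg (by linarith)] at had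
            linarith
          have hsub : Set.Ioc (q m) a ⊆ A := absorb (A := B) (B := A) isPreconnected_Ioc
            (fun x hx => (hcov x ⟨le_trans hsF.1.1 (le_of_lt hx.1), le_trans hx.2 haA.1.2⟩).symm)
            (fun y h1 h2 h3 h4 => hiso' y h1 h3 h2 h4)
            (fun x hx => ⟨le_trans hsF.1.1 (le_of_lt hx.1), le_trans hx.2 haA.1.2⟩)
            (fun y hy => ⟨ne_of_gt hy.1, by
              rw [abs_of_pos (by linarith [hy.1] : (0:ℝ) < y - q m)]
              linarith [hy.2]⟩)
            ⟨hgt, le_refl a⟩ haA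
          obtain ⟨x, hxA, hxV⟩ := case2R q hq_inj f hf' m hV hsV hgt hsub
          exact hgoal x hxA.1 hxA.2 hxV
    · -- some point of F avoids the rationals: continuity argument
      push_neg at hq1
      obtain ⟨s, hsF, hsq⟩ := hq1
      have hfc : ContinuousAt f s := by
        have heq : f = fun x => ∑' n, gterm q n x := funext hf'
        rw [heq]
        exact f_contAt q hsq
      rcases hcov s hsF.1 with hsA | hsB
      · have hnb : {x : ℝ | (x, f x) ∈ U} ∈ 𝓝 s :=
          (continuousAt_id.prodMk hfc).preimage_mem_nhds (hU.mem_nhds hsA.2)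
        obtain ⟨x, hxU, hxB⟩ := mem_closure_iff_nhds.mp hsF.2.2 _ hnb
        exact absurd hxU hxB.2
      · have hsV : (s, f s) ∈ V := hBV s hsB
        have hnb : {x : ℝ | (x, f x) ∈ V} ∈ 𝓝 s :=
          (continuousAt_id.prodMk hfc).preimage_mem_nhds (hV.mem_nhds hsV)
        obtain ⟨x, hxV, hxA⟩ := mem_closure_iff_nhds.mp hsF.2.1 _ hnb
        exact hgoal x hxA.1 hxA.2 hxV
  · -- B empty : pv's base point is in A, so pv ∈ U ∩ V
    obtain ⟨hx, hy⟩ := hpvS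
    have hA' : pv.1 ∈ A := (hcov _ hx).resolve_right (fun h => hBne ⟨_, h⟩)
    have hpv_eq : pv = (pv.1, f pv.1) := Prod.ext rfl hy
    exact ⟨pv, ⟨hx, hy⟩, hpv_eq ▸ hA'.2, hpvV⟩
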